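/- Let ρ_1,…,ρ_K ∈ (0,1), c_1,…,c_K > 0, α_1,…,α_K ∈ ℝ, and h_{-1,0} ≥ 0. If h̄_{1,0} ≥ max_k { ρ_k h_{-1,0} + ρ_k α_k (1-ρ_k)^{-1} }, then for every n ≥ 1, (∑_k c_k ρ_k^{n-1})/(∑_k c_k ρ_k^n) · h̄_{1,0} − (∑_k c_k α_k (1-ρ_k)^{-1} ρ_k^n)/(∑_k c_k ρ_k^n) ≥ h_{-1,0}. -/
import Mathlib

open Finset

theorem stmt_3 (K : ℕ) (hK : 0 < K) (ρ c α : Fin K → ℝ)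
    (hρ : ∀ k, ρ k ∈ Set.Ioo (0:ℝ) 1) (hc : ∀ k, 0 < c k)
    (h10 hb10 : ℝ) (hh10 : 0 ≤ h10)
    (hbig : ∀ k, ρ k * h10 + ρ k * α k * (1 - ρ k)⁻¹ ≤ hb10) :
    ∀ n : ℕ, 1 ≤ n →
      h10 ≤ (∑ k, c k * ρ k ^ (n - 1)) / (∑ k, c k * ρ k ^ n) * hb10 -
        (∑ k, c k * α k * (1 - ρ k)⁻¹ * ρ k ^ n) / (∑ k, c k * ρ k ^ n) := by
  intro n hn
  haveI : Nonempty (Fin K) := ⟨⟨0, hK⟩⟩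
  have hSpos : 0 < ∑ k, c k * ρ k ^ n :=
    Finset.sum_pos (fun k _ => mul_pos (hc k) (pow_pos (hρ k).1 n)) Finset.univ_nonempty
  have key : ∀ k ∈ Finset.univ, c k * ρ k ^ n * h10 + c k * α k * (1 - ρ k)⁻¹ * ρ k ^ n
      ≤ c k * ρ k ^ (n - 1) * hb10 := by
    intro k _
    have h1 := hbig k
    have hpp : 0 < ρ k ^ (n - 1) := pow_pos (hρ k).1 _
    have hn' : ρ k ^ n = ρ k ^ (n - 1) * ρ k := by
      rw [← pow_succ]; congr 1; omega
    rw [hn']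
    nlinarith [mul_le_mul_of_nonneg_left h1 (mul_pos (hc k) hpp).le, hc k, hpp]
  have hsum : (∑ k, c k * ρ k ^ n) * h10 + ∑ k, c k * α k * (1 - ρ k)⁻¹ * ρ k ^ n
      ≤ (∑ k, c k * ρ k ^ (n - 1)) * hb10 := by
    rw [Finset.sum_mul, ← Finset.sum_add_distrib, Finset.sum_mul]
    exact Finset.sum_le_sum key
  rw [div_mul_eq_mul_div, div_sub_div_same, le_div_iff₀ hSpos]
  linarith
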